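/- Let q ∈ {2, 5, 7, 12, 47}. Then for every feasible pair (q,c), the number n_q(c) = (q+1)(q+2)·c + (2q³ + 3q² − q) + (q⁴ − q²)/c satisfies n_q(c) ≥ 4q³ + 6q² − 2(q+1). Moreover the bound is attained: (q, q−1) is feasible and n_q(q−1) = 4q³ + 6q² − 2q − 2. -/

import Mathlib

/-- A pair `(q, c)` of positive integers is *feasible* for an SRNT graph if
`1 ≤ c ≤ q(q+1)`, `c` divides `q⁴ - q²`, `c + 2q` divides `q(q+1)(q+2)(q+3)`,
and the integers `α = (q⁴ - q²)/c` and `β = q(q+1)(q+2)(q+3)/(c+2q)` have the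
same parity. -/
def Feasible (q c : ℤ) : Prop :=
  0 < q ∧ 1 ≤ c ∧ c ≤ q * (q + 1) ∧
  c ∣ q ^ 4 - q ^ 2 ∧
  (c + 2 * q) ∣ q * (q + 1) * (q + 2) * (q + 3) ∧
  ((q ^ 4 - q ^ 2) / c) % 2 = (q * (q + 1) * (q + 2) * (q + 3) / (c + 2 * q)) % 2

/-- The number of vertices `n_q(c) = (q+1)(q+2)c + (2q³ + 3q² - q) + (q⁴ - q²)/c`. -/
def nq (q c : ℤ) : ℤ :=
  (q + 1) * (q + 2) * c + (2 * q ^ 3 + 3 * q ^ 2 - q) + (q ^ 4 - q ^ 2) / c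

/-- **Theorem 7 (exceptional cases `q = 2, 5, 7, 12, 47`).**  Every feasible pair
`(q,c)` has `n_q(c) ≥ 4q³ + 6q² - 2(q+1)`, and the bound is attained at
`c = q - 1`. -/
theorem srnt_theorem7_exceptional1 (q : ℤ)
    (hq : q = 2 ∨ q = 5 ∨ q = 7 ∨ q = 12 ∨ q = 47) :
    (∀ c : ℤ, Feasible q c → 4 * q ^ 3 + 6 * q ^ 2 - 2 * (q + 1) ≤ nq q c) ∧
    Feasible q (q - 1) ∧ nq q (q - 1) = 4 * q ^ 3 + 6 * q ^ 2 - 2 * q - 2 := by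
  have hq2 : 2 ≤ q := by rcases hq with h|h|h|h|h <;> omega
  refine ⟨?_, ?_, ?_⟩
  · intro c hc
    obtain ⟨hq0, hc1, hcq, hdvd, -, -⟩ := hc
    have hc0 : 0 < c := hc1
    obtain ⟨d, hd⟩ := hdvd
    have hdiv : (q ^ 4 - q ^ 2) / c = d := by
      rw [hd]; exact Int.mul_ediv_cancel_left _ (ne_of_gt hc0)
    have key : 0 ≤ (q + 1) * (q + 2) * ((c - q + 1) * ((q + 2) * c - q ^ 2)) := by
      rcases le_or_gt c (q - 2) with h | h
      · have h1 : c - q + 1 ≤ 0 := by omega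
        have h2 : (q + 2) * c - q ^ 2 ≤ 0 := by nlinarith [mul_le_mul_of_nonneg_left h (show (0:ℤ) ≤ q + 2 by linarith)]
        nlinarith [mul_nonneg (neg_nonneg.2 h1) (neg_nonneg.2 h2),
          mul_nonneg (mul_nonneg (show (0:ℤ) ≤ q + 1 by linarith) (show (0:ℤ) ≤ q + 2 by linarith))
            (mul_nonneg (neg_nonneg.2 h1) (neg_nonneg.2 h2))]
      · have h1 : 0 ≤ c - q + 1 := by omega
        have h2 : 0 ≤ (q + 2) * c - q ^ 2 := by nlinarith [mul_le_mul_of_nonneg_left (show q - 1 ≤ c by omega) (show (0:ℤ) ≤ q + 2 by linarith)]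
        exact mul_nonneg (mul_nonneg (by linarith) (by linarith)) (mul_nonneg h1 h2)
    have hk2 : 0 ≤ (q + 2) * (c * ((q + 1) * (q + 2) * c + d - (2 * q ^ 3 + 3 * q ^ 2 - q - 2))) := by
      have hr : (q + 2) * (c * ((q + 1) * (q + 2) * c + d - (2 * q ^ 3 + 3 * q ^ 2 - q - 2)))
          = (q + 1) * (q + 2) * ((c - q + 1) * ((q + 2) * c - q ^ 2))
            + (q + 2) * (c * d - (q ^ 4 - q ^ 2)) := by ring
      rw [hr, ← hd]
      simpa using key
    have h3 : 0 ≤ c * ((q + 1) * (q + 2) * c + d - (2 * q ^ 3 + 3 * q ^ 2 - q - 2)) :=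
      nonneg_of_mul_nonneg_right hk2 (by linarith)
    have h4 : 0 ≤ (q + 1) * (q + 2) * c + d - (2 * q ^ 3 + 3 * q ^ 2 - q - 2) :=
      nonneg_of_mul_nonneg_right (by linarith [h3]) hc0
    unfold nq
    rw [hdiv]
    linarith
  · rcases hq with h|h|h|h|h <;> subst h <;>
      refine ⟨by norm_num, by norm_num, by norm_num, by decide, by decide, by decide⟩
  · rcases hq with h|h|h|h|h <;> subst h <;> simp [nq]
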